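/- Let π : G × X → X be an action of a topological group G on a uniform space X such that π is π-uniform and every orbit map π_x : G → X, g ↦ g·x, is continuous. Then π : G × X → X is (jointly) continuous. -/

import Mathlib

/-- An action `act` of a group `G` equipped with a topology `σ` on a set `X` equipped with a
uniformity (filter) `𝔅` is *π-uniform* if for every `g₀ ∈ G` and every entourage `ε ∈ 𝔅`
there exist an entourage `δ ∈ 𝔅` and a neighborhood `U` of `g₀` such that
`(g • x, g • y) ∈ ε` whenever `(x, y) ∈ δ` and `g ∈ U`. -/
def IsPiUniform {G X : Type*} (σ : TopologicalSpace G) (𝔅 : Filter (X × X))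
    (act : G → X → X) : Prop :=
  ∀ g₀ : G, ∀ ε ∈ 𝔅, ∃ δ ∈ 𝔅, ∃ U ∈ @nhds G σ g₀,
    ∀ g ∈ U, ∀ x y : X, (x, y) ∈ δ → (act g x, act g y) ∈ ε

/-- If `π : G × X → X` is a π-uniform action of a topological group `G` on
a uniform space `X` and all orbit maps `g ↦ g • x` are continuous, then the action is
(jointly) continuous. -/
theorem continuous_smul_of_piUniform {G X : Type*}
    [Group G] [TopologicalSpace G] [IsTopologicalGroup G] [UniformSpace X] [MulAction G X]
    (hπ : IsPiUniform (inferInstance : TopologicalSpace G) (uniformity X)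
      (fun (g : G) (x : X) => g • x))
    (horb : ∀ x : X, Continuous fun g : G => g • x) :
    Continuous fun p : G × X => p.1 • p.2 := by
  rw [continuous_iff_continuousAt]
  rintro ⟨g₀, x₀⟩
  intro s hs
  obtain ⟨ε, hε, hεs⟩ := UniformSpace.mem_nhds_iff.1 hs
  obtain ⟨ε', hε', hsymm, hcomp⟩ := comp_symm_mem_uniformity_sets hε
  obtain ⟨δ, hδ, U, hU, hUδ⟩ := hπ g₀ ε' hε'
  have hV : (fun g : G => g • x₀) ⁻¹' UniformSpace.ball (g₀ • x₀) ε' ∈ nhds g₀ :=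
    (horb x₀).continuousAt (UniformSpace.ball_mem_nhds _ hε')
  have hmem : (U ∩ (fun g : G => g • x₀) ⁻¹' UniformSpace.ball (g₀ • x₀) ε') ×ˢ
      UniformSpace.ball x₀ δ ∈ nhds (g₀, x₀) := by
    apply prod_mem_nhds (Filter.inter_mem hU hV) (UniformSpace.ball_mem_nhds _ hδ)
  rw [Filter.mem_map]
  refine Filter.mem_of_superset hmem ?_
  rintro ⟨g, x⟩ ⟨⟨hgU, hgB⟩, hxB⟩
  apply hεs
  exact hcomp ⟨g • x₀, hgB, hUδ g hgU x₀ x hxB⟩
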